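/- arXiv:2005.08592 — 3 statements merged into one kernel-verified Lean document; each statement's English description precedes it below -/
import Mathlib

section
/- For fixed real numbers a > 0 and b > 0, the function φ ↦ log(1 + φ) − φ + (1 + φ)·a/(a + b) over φ ≥ 0 is maximized at φ* = a/b, and its maximum value equals log(1 + a/b). Consequently log(1 + a/b) = max_{φ ≥ 0} [log(1+φ) − φ + (1+φ)a/(a+b)]. -/
/-- Lagrangian dual transform (scalar form): for a, b > 0, the function
φ ↦ log(1+φ) - φ + (1+φ)a/(a+b) over φ ≥ 0 is maximized at φ* = a/b with
maximum value log(1 + a/b). -/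
theorem stmt2 (a b : ℝ) (ha : 0 < a) (hb : 0 < b) :
    IsMaxOn (fun φ : ℝ => Real.log (1 + φ) - φ + (1 + φ) * a / (a + b))
      (Set.Ici 0) (a / b) ∧
    Real.log (1 + a / b) - a / b + (1 + a / b) * a / (a + b) = Real.log (1 + a / b) := by
  have hab : 0 < a + b := by linarith
  constructor
  · intro φ hφ
    simp only [Set.mem_Ici] at hφ
    simp only [Set.mem_setOf_eq]
    have h1 : (0:ℝ) < 1 + φ := by linarith
    have h2 : (0:ℝ) < 1 + a / b := by positivity
    have hlog : Real.log ((1 + φ) / (1 + a / b)) ≤ (1 + φ) / (1 + a / b) - 1 :=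
      Real.log_le_sub_one_of_pos (by positivity)
    rw [Real.log_div h1.ne' h2.ne'] at hlog
    have h3 : (1 + φ) / (1 + a / b) = (1 + φ) * b / (a + b) := by
      field_simp; ring
    rw [h3] at hlog
    have e1 : -φ + (1 + φ) * a / (a + b) + ((1 + φ) * b / (a + b) - 1) = 0 := by
      field_simp; ring
    have e2 : -(a / b) + (1 + a / b) * a / (a + b) = 0 := by
      field_simp; ring
    linarith
  · have e2 : (1 + a / b) * a / (a + b) = a / b := by
      field_simp; ring
    rw [e2]; ring
end

section
/- Combining the two transforms: for a > 0, b > 0, log(1 + a/b) = max_{φ ≥ 0} max_{λ∈ℂ} [log(1+φ) − φ + 2 Re(conj(λ)·√((1+φ)a)) − |λ|²(a+b)], where the inner maximum over λ is attained at λ* = √((1+φ)a)/(a+b). -/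
/-- Quadratic bound: 2·Re(conj l · s) − |l|² m ≤ s²/m for m > 0. -/
lemma quad_le (s m : ℝ) (hm : 0 < m) (l : ℂ) :
    2 * ((starRingEnd ℂ l) * ((s : ℝ) : ℂ)).re - ‖l‖ ^ 2 * m ≤ s ^ 2 / m := by
  have hre : ((starRingEnd ℂ l) * ((s : ℝ) : ℂ)).re = l.re * s := by
    simp [Complex.mul_re]
  have habs : ‖l‖ ^ 2 = l.re ^ 2 + l.im ^ 2 := by
    rw [Complex.sq_norm, Complex.normSq_apply]; ring
  rw [hre, habs, le_div_iff₀ hm]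
  nlinarith [sq_nonneg (l.re * m - s), sq_nonneg l.im, hm.le, mul_nonneg (sq_nonneg l.im) hm.le]

/-- Value at the maximizer l* = s/m. -/
lemma quad_eq (s m : ℝ) (hm : 0 < m) :
    2 * ((starRingEnd ℂ (((s / m : ℝ)) : ℂ)) * ((s : ℝ) : ℂ)).re
      - ‖(((s / m : ℝ)) : ℂ)‖ ^ 2 * m = s ^ 2 / m := by
  rw [Complex.conj_ofReal, ← Complex.ofReal_mul, Complex.ofReal_re, Complex.norm_real, Real.norm_eq_abs,
    sq_abs]
  field_simp
  ring

/-- Combining the Lagrangian dual and complex quadratic transforms: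
log(1 + a/b) = max over φ ≥ 0 and λ ∈ ℂ of
log(1+φ) - φ + 2 Re(conj(λ)√((1+φ)a)) - |λ|²(a+b), with the inner maximum over λ
attained at λ* = √((1+φ)a)/(a+b). -/
theorem stmt4 (a b : ℝ) (ha : 0 < a) (hb : 0 < b) :
    (∀ φ : ℝ, 0 ≤ φ → ∀ l : ℂ,
      Real.log (1 + φ) - φ + 2 * ((starRingEnd ℂ l) * ((Real.sqrt ((1 + φ) * a) : ℝ) : ℂ)).re
        - ‖l‖ ^ 2 * (a + b) ≤ Real.log (1 + a / b)) ∧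
    (∃ φ : ℝ, 0 ≤ φ ∧ ∃ l : ℂ,
      Real.log (1 + φ) - φ + 2 * ((starRingEnd ℂ l) * ((Real.sqrt ((1 + φ) * a) : ℝ) : ℂ)).re
        - ‖l‖ ^ 2 * (a + b) = Real.log (1 + a / b)) ∧
    (∀ φ : ℝ, 0 ≤ φ →
      IsMaxOn (fun l : ℂ =>
        Real.log (1 + φ) - φ + 2 * ((starRingEnd ℂ l) * ((Real.sqrt ((1 + φ) * a) : ℝ) : ℂ)).re
          - ‖l‖ ^ 2 * (a + b))
        Set.univ ((Real.sqrt ((1 + φ) * a) / (a + b) : ℝ) : ℂ)) := by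
  have hm : 0 < a + b := by linarith
  have hsq : ∀ φ : ℝ, 0 ≤ φ → Real.sqrt ((1 + φ) * a) ^ 2 = (1 + φ) * a := fun φ hφ =>
    Real.sq_sqrt (by nlinarith)
  -- the outer bound: log(1+φ) - φ + (1+φ)a/(a+b) ≤ log(1+a/b)
  have outer : ∀ φ : ℝ, 0 ≤ φ →
      Real.log (1 + φ) - φ + (1 + φ) * a / (a + b) ≤ Real.log (1 + a / b) := by
    intro φ hφ
    have h1 : (0:ℝ) < 1 + φ := by linarith
    have h2 : (0:ℝ) < 1 + a / b := by positivity
    have hlog : Real.log ((1 + φ) / (1 + a / b)) ≤ (1 + φ) / (1 + a / b) - 1 :=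
      Real.log_le_sub_one_of_pos (by positivity)
    rw [Real.log_div (ne_of_gt h1) (ne_of_gt h2)] at hlog
    have hq : (1 + φ) / (1 + a / b) = (1 + φ) * b / (a + b) := by
      field_simp; ring
    rw [hq] at hlog
    have : (1 + φ) * b / (a + b) + (1 + φ) * a / (a + b) = 1 + φ := by
      field_simp; ring
    linarith
  refine ⟨fun φ hφ l => ?_, ⟨a / b, by positivity,
    ((Real.sqrt ((1 + a / b) * a) / (a + b) : ℝ) : ℂ), ?_⟩, fun φ hφ => ?_⟩
  · have h := quad_le (Real.sqrt ((1 + φ) * a)) (a + b) hm l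
    rw [hsq φ hφ] at h
    have := outer φ hφ
    linarith
  · have h := quad_eq (Real.sqrt ((1 + a / b) * a)) (a + b) hm
    rw [hsq (a / b) (by positivity)] at h
    have hv : (1 + a / b) * a / (a + b) = a / b := by field_simp; ring
    linarith [h, hv]
  · intro l _
    simp only [Set.mem_setOf_eq]
    have h := quad_le (Real.sqrt ((1 + φ) * a)) (a + b) hm l
    have he := quad_eq (Real.sqrt ((1 + φ) * a)) (a + b) hm
    linarith
end

section
/- For the SINR θ = a/b with a, b > 0 and the surrogate r̂(φ, λ) = log(1+φ) − φ + 2Re(conj(λ)√((1+φ)a)) − |λ|²(a+b): for any fixed φ ≥ 0, max_λ r̂(φ,λ) = log(1+φ) − φ + (1+φ)·a/(a+b), and this is a concave function of φ whose unique stationary point is φ = a/b. -/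
section Aux

variable (a b : ℝ)

private lemma stmt18_deriv (ha : 0 < a) (hb : 0 < b) (φ : ℝ) (hφ : 0 ≤ φ) :
    HasDerivAt (fun φ : ℝ => Real.log (1 + φ) - φ + (1 + φ) * a / (a + b))
      (1 / (1 + φ) - 1 + a / (a + b)) φ := by
  have h1 : HasDerivAt (fun x : ℝ => 1 + x) 1 φ := (hasDerivAt_id φ).const_add 1
  have hne : (1 + φ) ≠ 0 := by positivity
  have h2 : HasDerivAt (fun x : ℝ => Real.log (1 + x)) (1 / (1 + φ)) φ := by
    simpa [one_div] using h1.log hne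
  have h3 : HasDerivAt (fun x : ℝ => (1 + x) * a / (a + b)) (a / (a + b)) φ := by
    have := (h1.mul_const a).div_const (a + b)
    simpa using this
  exact (h2.sub (hasDerivAt_id φ)).add h3

private lemma stmt18_concave (ha : 0 < a) (hb : 0 < b) :
    ConcaveOn ℝ (Set.Ici 0)
      (fun φ : ℝ => Real.log (1 + φ) - φ + (1 + φ) * a / (a + b)) := by
  set c := a / (a + b) with hc
  have hlog : ConcaveOn ℝ (Set.Ici (0:ℝ)) (fun x : ℝ => Real.log (1 + x)) := by
    have h := (strictConcaveOn_log_Ioi.concaveOn).comp_affineMap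
      (AffineMap.lineMap (1:ℝ) (2:ℝ))
    have hsub : Set.Ici (0:ℝ) ⊆ (AffineMap.lineMap (1:ℝ) (2:ℝ)) ⁻¹' Set.Ioi 0 := by
      intro x hx
      simp only [Set.mem_preimage, AffineMap.lineMap_apply_ring, Set.mem_Ioi, Set.mem_Ici] at *
      linarith
    have h2 := h.subset hsub (convex_Ici 0)
    have : (Real.log ∘ (AffineMap.lineMap (1:ℝ) (2:ℝ))) = fun x : ℝ => Real.log (1 + x) := by
      ext x
      simp [AffineMap.lineMap_apply_ring, Function.comp]
      ring_nf
    rwa [this] at h2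
  have haff : ConcaveOn ℝ (Set.Ici (0:ℝ)) (fun x : ℝ => (c - 1) * x + c) := by
    refine ⟨convex_Ici 0, ?_⟩
    intro x _ y _ p q hp hq hpq
    simp only [smul_eq_mul]
    have heq : p * ((c - 1) * x + c) + q * ((c - 1) * y + c)
        = (c - 1) * (p * x + q * y) + c := by linear_combination c * hpq
    exact le_of_eq heq
  have h3 := hlog.add haff
  have : (fun φ : ℝ => Real.log (1 + φ) - φ + (1 + φ) * a / (a + b))
      = (fun x : ℝ => Real.log (1 + x)) + (fun x : ℝ => (c - 1) * x + c) := by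
    ext x
    have hab : a + b ≠ 0 := by positivity
    simp only [Pi.add_apply, hc]
    field_simp
    ring
  rwa [this]

end Aux

/-- Optimality of the auxiliary-variable updates in the FMP inner loop: for each
φ ≥ 0, maximizing the surrogate r̂(φ, λ) over λ gives
h(φ) = log(1+φ) - φ + (1+φ)a/(a+b), which is concave on φ ≥ 0 with unique stationary
point φ = a/b. -/
theorem stmt18 (a b : ℝ) (ha : 0 < a) (hb : 0 < b) :
    (∀ φ : ℝ, 0 ≤ φ →
      (∀ l : ℂ,
        Real.log (1 + φ) - φ + 2 * ((starRingEnd ℂ l) * ((Real.sqrt ((1 + φ) * a) : ℝ) : ℂ)).re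
            - ‖l‖ ^ 2 * (a + b)
          ≤ Real.log (1 + φ) - φ + (1 + φ) * a / (a + b)) ∧
      Real.log (1 + φ) - φ
          + 2 * ((starRingEnd ℂ ((Real.sqrt ((1 + φ) * a) / (a + b) : ℝ) : ℂ))
              * ((Real.sqrt ((1 + φ) * a) : ℝ) : ℂ)).re
          - ‖((Real.sqrt ((1 + φ) * a) / (a + b) : ℝ) : ℂ)‖ ^ 2 * (a + b)
        = Real.log (1 + φ) - φ + (1 + φ) * a / (a + b)) ∧
    ConcaveOn ℝ (Set.Ici 0)
      (fun φ : ℝ => Real.log (1 + φ) - φ + (1 + φ) * a / (a + b)) ∧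
    deriv (fun φ : ℝ => Real.log (1 + φ) - φ + (1 + φ) * a / (a + b)) (a / b) = 0 ∧
    (∀ φ : ℝ, 0 ≤ φ →
      deriv (fun φ : ℝ => Real.log (1 + φ) - φ + (1 + φ) * a / (a + b)) φ = 0 →
      φ = a / b) := by
  have hab : (0:ℝ) < a + b := by linarith
  refine ⟨?_, stmt18_concave a b ha hb, ?_, ?_⟩
  · intro φ hφ
    set s := Real.sqrt ((1 + φ) * a) with hs
    have hsq : s ^ 2 = (1 + φ) * a := Real.sq_sqrt (by positivity)
    constructor
    · intro l
      have hre : ((starRingEnd ℂ l) * ((s : ℝ) : ℂ)).re = l.re * s := by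
        simp [Complex.mul_re]
      have habs : ‖l‖ ^ 2 = l.re ^ 2 + l.im ^ 2 := by
        rw [Complex.sq_norm, Complex.normSq_apply]; ring
      rw [hre, habs]
      have key : 2 * (l.re * s) - (l.re ^ 2 + l.im ^ 2) * (a + b) ≤ (1 + φ) * a / (a + b) := by
        rw [← hsq, le_div_iff₀ hab]
        nlinarith [sq_nonneg (l.re * (a + b) - s), sq_nonneg (l.im * (a + b)), hab]
      linarith
    · have hre : ((starRingEnd ℂ ((s / (a+b) : ℝ) : ℂ)) * ((s : ℝ) : ℂ)).re
          = s / (a+b) * s := by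
        rw [Complex.conj_ofReal, ← Complex.ofReal_mul, Complex.ofReal_re]
      have habs : ‖((s / (a+b) : ℝ) : ℂ)‖ ^ 2 = (s / (a+b)) ^ 2 := by
        rw [Complex.norm_real, Real.norm_eq_abs, sq_abs]
      rw [hre, habs]
      have : 2 * (s / (a+b) * s) - (s / (a+b)) ^ 2 * (a + b) = (1 + φ) * a / (a+b) := by
        rw [← hsq, div_pow]
        field_simp
        ring
      linarith
  · rw [(stmt18_deriv a b ha hb _ (by positivity)).deriv]
    have h1 : 1 + a / b = (a + b) / b := by field_simp; ring
    rw [h1]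
    field_simp
    ring
  · intro φ hφ hderiv
    rw [(stmt18_deriv a b ha hb φ hφ).deriv] at hderiv
    have hne : (0:ℝ) < 1 + φ := by linarith
    have : 1 / (1 + φ) = b / (a + b) := by
      have : a / (a + b) - 1 = -(b / (a + b)) := by field_simp; ring
      linarith [hderiv, this]
    have h2 : (a + b) = b * (1 + φ) := by
      field_simp at this
      linarith
    field_simp
    nlinarith [h2]
end
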